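/- If D is a digraph with n ≥ 2 vertices and a arcs, then its largest singular value σ_{1α}(D) of A_α(D) satisfies σ_{1α}(D) ≥ a/n, with equality if and only if D is (a/n)-regular (all indegrees and outdegrees equal a/n). -/

import Mathlib

open Matrix Real

/-- Adjacency matrix (over ℝ) of a digraph given by an arc relation on `Fin n`. -/
def adjMat {n : ℕ} (R : Fin n → Fin n → Prop) [DecidableRel R] :
    Matrix (Fin n) (Fin n) ℝ :=
  Matrix.of fun i j => if R i j then 1 else 0

/-- Outdegree of a vertex. -/
def outdeg {n : ℕ} (R : Fin n → Fin n → Prop) [DecidableRel R] (i : Fin n) : ℕ :=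
  (Finset.univ.filter fun j => R i j).card

/-- Indegree of a vertex. -/
def indeg {n : ℕ} (R : Fin n → Fin n → Prop) [DecidableRel R] (j : Fin n) : ℕ :=
  (Finset.univ.filter fun i => R i j).card

/-- The `A_α` matrix of a digraph: `α Δ⁺ + (1-α) A`. -/
noncomputable def Amat {n : ℕ} (α : ℝ) (R : Fin n → Fin n → Prop) [DecidableRel R] :
    Matrix (Fin n) (Fin n) ℝ :=
  α • Matrix.diagonal (fun i => (outdeg R i : ℝ)) + (1 - α) • adjMat R

/-- The singular values of a real square matrix `M`: the nonnegative square roots of the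
eigenvalues of `M Mᵀ` (`Mᴴ = Mᵀ` over ℝ). -/
noncomputable def singVals {m : Type*} [Fintype m] [DecidableEq m]
    (M : Matrix m m ℝ) (i : m) : ℝ :=
  Real.sqrt ((Matrix.isHermitian_mul_conjTranspose_self M).eigenvalues i)

/-- Trace norm: sum of the singular values. -/
noncomputable def traceNorm {m : Type*} [Fintype m] [DecidableEq m]
    (M : Matrix m m ℝ) : ℝ :=
  ∑ i, singVals M i

/-- Spectral norm: the largest singular value. -/
noncomputable def specNorm {m : Type*} [Fintype m] [DecidableEq m]
    (M : Matrix m m ℝ) : ℝ :=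
  ⨆ i, singVals M i

lemma rayleigh {m : Type*} [Fintype m] [DecidableEq m] [Nonempty m]
    (S : Matrix m m ℝ) (hS : S.IsHermitian) (x : m → ℝ) :
    x ⬝ᵥ (S *ᵥ x) ≤ (⨆ i, hS.eigenvalues i) * (x ⬝ᵥ x) := by
  set U : Matrix m m ℝ := (hS.eigenvectorUnitary : Matrix m m ℝ) with hUdef
  have hU1 : U * star U = 1 := (Matrix.mem_unitaryGroup_iff).mp hS.eigenvectorUnitary.2
  have hUH : star U = Uᵀ := by
    rw [Matrix.star_eq_conjTranspose]
    ext i j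
    simp [Matrix.conjTranspose_apply]
  set y := x ᵥ* U with hy
  have hdiag : (RCLike.ofReal ∘ hS.eigenvalues : m → ℝ) = hS.eigenvalues := by
    ext i; simp
  have key : x ⬝ᵥ (S *ᵥ x) = ∑ i, hS.eigenvalues i * (y i)^2 := by
    conv_lhs => rw [hS.spectral_theorem, Unitary.conjStarAlgAut_apply, hUH]
    rw [← Matrix.mulVec_mulVec, ← Matrix.mulVec_mulVec, Matrix.mulVec_transpose,
      Matrix.dotProduct_mulVec, hdiag]
    simp only [dotProduct, Matrix.mulVec_diagonal, ← hy]
    ring_nf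
    exact Finset.sum_congr rfl fun i _ => by rw [← hUdef, ← hy]; ring
  have hyy : y ⬝ᵥ y = x ⬝ᵥ x := by
    have : y ⬝ᵥ y = x ⬝ᵥ ((U * Uᵀ) *ᵥ x) := by
      rw [← Matrix.mulVec_mulVec, Matrix.dotProduct_mulVec, Matrix.mulVec_transpose]
    rw [this, ← hUH, hU1, Matrix.one_mulVec]
  have hmax : ∀ i, hS.eigenvalues i ≤ ⨆ j, hS.eigenvalues j := fun i =>
    le_ciSup (Set.Finite.bddAbove (Set.finite_range _)) i
  calc x ⬝ᵥ (S *ᵥ x) = ∑ i, hS.eigenvalues i * (y i)^2 := key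
    _ ≤ ∑ i, (⨆ j, hS.eigenvalues j) * (y i)^2 := by
        apply Finset.sum_le_sum
        intro i _
        exact mul_le_mul_of_nonneg_right (hmax i) (sq_nonneg _)
    _ = (⨆ j, hS.eigenvalues j) * (x ⬝ᵥ x) := by
        rw [← Finset.mul_sum, ← hyy]
        congr 1
        simp [dotProduct, sq]

lemma eig_le_rowsum {m : Type*} [Fintype m] [DecidableEq m]
    (S : Matrix m m ℝ) (hS : S.IsHermitian) (B : ℝ)
    (hB : ∀ k, ∑ j, |S k j| ≤ B) (i : m) : hS.eigenvalues i ≤ B := by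
  set v : m → ℝ := (WithLp.equiv 2 (m → ℝ)) (hS.eigenvectorBasis i) with hv
  have hSv : S *ᵥ v = hS.eigenvalues i • v := hS.mulVec_eigenvectorBasis i
  have hvne : v ≠ 0 := by
    have h0 : hS.eigenvectorBasis i ≠ 0 := hS.eigenvectorBasis.orthonormal.ne_zero i
    intro h
    apply h0
    apply (WithLp.equiv 2 (m → ℝ)).injective
    exact h
  obtain ⟨j0, hj0⟩ := Function.ne_iff.mp hvne
  obtain ⟨k, -, hk⟩ := Finset.exists_max_image Finset.univ (fun j => |v j|)
    ⟨j0, Finset.mem_univ j0⟩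
  have hk' : ∀ j, |v j| ≤ |v k| := fun j => hk j (Finset.mem_univ j)
  have hkpos : 0 < |v k| := lt_of_lt_of_le (abs_pos.mpr hj0) (hk' j0)
  have heq : hS.eigenvalues i * v k = ∑ j, S k j * v j := by
    have := congrFun hSv k
    simpa [Matrix.mulVec, dotProduct] using this.symm
  have habs : |hS.eigenvalues i| * |v k| ≤ B * |v k| := by
    calc |hS.eigenvalues i| * |v k| = |hS.eigenvalues i * v k| := (abs_mul _ _).symm
      _ = |∑ j, S k j * v j| := by rw [heq]
      _ ≤ ∑ j, |S k j * v j| := Finset.abs_sum_le_sum_abs _ _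
      _ ≤ ∑ j, |S k j| * |v k| := by
          apply Finset.sum_le_sum
          intro j _
          rw [abs_mul]
          exact mul_le_mul_of_nonneg_left (hk' j) (abs_nonneg _)
      _ = (∑ j, |S k j|) * |v k| := by rw [Finset.sum_mul]
      _ ≤ B * |v k| := mul_le_mul_of_nonneg_right (hB k) (abs_nonneg _)
  have := le_of_mul_le_mul_right habs hkpos
  exact le_trans (le_abs_self _) this

lemma transfer {m : Type*} [Fintype m] [DecidableEq m] [Nonempty m] (M : Matrix m m ℝ)
    (hmax0 : 0 ≤ ⨆ i, (Matrix.isHermitian_mul_conjTranspose_self M).eigenvalues i) (i : m) :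
    (Matrix.isHermitian_conjTranspose_mul_self M).eigenvalues i ≤
      ⨆ j, (Matrix.isHermitian_mul_conjTranspose_self M).eigenvalues j := by
  set hS' := Matrix.isHermitian_conjTranspose_mul_self M
  set hS := Matrix.isHermitian_mul_conjTranspose_self M
  set lam := hS'.eigenvalues i with hlam
  set v : m → ℝ := (WithLp.equiv 2 (m → ℝ)) (hS'.eigenvectorBasis i) with hv
  have hSv : (Mᴴ * M) *ᵥ v = lam • v := hS'.mulVec_eigenvectorBasis i
  have hvne : v ≠ 0 := by
    have h0 : hS'.eigenvectorBasis i ≠ 0 := hS'.eigenvectorBasis.orthonormal.ne_zero i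
    intro h
    exact h0 ((WithLp.equiv 2 (m → ℝ)).injective (by exact h))
  set w := M *ᵥ v with hw
  by_cases hwz : w = 0
  · have h0 : (Mᴴ * M) *ᵥ v = 0 := by
      rw [← Matrix.mulVec_mulVec, ← hw, hwz, Matrix.mulVec_zero]
    rw [hSv] at h0
    rcases smul_eq_zero.mp h0 with h | h
    · rw [h]; exact hmax0
    · exact absurd h hvne
  · have hSw : (M * Mᴴ) *ᵥ w = lam • w := by
      rw [hw, Matrix.mulVec_mulVec, mul_assoc, ← Matrix.mulVec_mulVec, hSv, Matrix.mulVec_smul]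
    have hray := rayleigh (M * Mᴴ) hS w
    rw [hSw, dotProduct_smul] at hray
    have hwnn : 0 ≤ w ⬝ᵥ w := Finset.sum_nonneg fun j _ => mul_self_nonneg (w j)
    have hwpos : 0 < w ⬝ᵥ w := by
      rcases lt_or_eq_of_le hwnn with h | h
      · exact h
      · exact absurd ((dotProduct_self_eq_zero).mp h.symm) hwz
    have : lam * (w ⬝ᵥ w) ≤ (⨆ j, hS.eigenvalues j) * (w ⬝ᵥ w) := by simpa using hray
    exact le_of_mul_le_mul_right this hwpos

lemma allEq {m : Type*} [Fintype m] (f : m → ℝ) (t : ℝ)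
    (hsum : ∑ j, f j = (Fintype.card m : ℝ) * t)
    (hsq : ∑ j, f j ^ 2 ≤ (Fintype.card m : ℝ) * t ^ 2) : ∀ j, f j = t := by
  have key : ∑ j, (f j - t) ^ 2 ≤ 0 := by
    have expand : ∑ j, (f j - t) ^ 2
        = ∑ j, f j ^ 2 - 2 * t * (∑ j, f j) + (Fintype.card m : ℝ) * t ^ 2 := by
      rw [show (2:ℝ) * t * ∑ j, f j = ∑ j, 2 * t * f j from Finset.mul_sum ..,
        show ((Fintype.card m : ℝ) * t ^ 2) = ∑ _j : m, t^2 by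
          rw [Finset.sum_const, Finset.card_univ, nsmul_eq_mul],
        ← Finset.sum_sub_distrib, ← Finset.sum_add_distrib]
      exact Finset.sum_congr rfl fun j _ => by ring
    rw [expand, hsum]
    nlinarith
  intro j
  have hz : ∀ j ∈ Finset.univ, (f j - t)^2 = 0 := by
    rw [← Finset.sum_eq_zero_iff_of_nonneg (fun j _ => sq_nonneg (f j - t))]
    exact le_antisymm key (Finset.sum_nonneg fun j _ => sq_nonneg _)
  have := hz j (Finset.mem_univ j)
  nlinarith [this]

/-- For a digraph `D` with `n ≥ 2` vertices and `a` arcs, `σ_{1α}(D) ≥ a/n`, with equality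
iff `D` is `a/n`-regular (all outdegrees and indegrees equal `a/n`). -/
theorem stmt_10 (n : ℕ) (hn : 2 ≤ n) (R : Fin n → Fin n → Prop) [DecidableRel R]
    (hirr : ∀ i, ¬ R i i) (α : ℝ) (hα0 : 0 ≤ α) (hα1 : α < 1)
    (a : ℕ) (ha : a = ∑ i, outdeg R i) :
    (a : ℝ) / n ≤ specNorm (Amat α R) ∧
      (specNorm (Amat α R) = (a : ℝ) / n ↔
        ∀ i, (outdeg R i : ℝ) = (a : ℝ) / n ∧ (indeg R i : ℝ) = (a : ℝ) / n) := by
  haveI : NeZero n := ⟨by omega⟩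
  haveI : Nonempty (Fin n) := ⟨⟨0, by omega⟩⟩
  have hnpos : (0:ℝ) < n := by positivity
  set M := Amat α R with hM
  set hS := Matrix.isHermitian_mul_conjTranspose_self M with hhS
  set lmax := ⨆ i, hS.eigenvalues i with hlmax
  have hsing : ∀ i, singVals M i = Real.sqrt (hS.eigenvalues i) := fun i => rfl
  have h1α : (0:ℝ) < 1 - α := by linarith
  -- entries
  have hMapp : ∀ i j, M i j
      = α * (if i = j then (outdeg R i : ℝ) else 0) + (1-α) * (if R i j then 1 else 0) := by
    intro i j
    simp [hM, Amat, adjMat, Matrix.diagonal_apply, Matrix.add_apply]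
  have hMnn : ∀ i j, 0 ≤ M i j := by
    intro i j
    rw [hMapp]
    apply add_nonneg
    · apply mul_nonneg hα0; split <;> positivity
    · apply mul_nonneg h1α.le; split <;> norm_num
  have hMconj : ∀ i j, Mᴴ i j = M j i := by
    intro i j; simp [Matrix.conjTranspose_apply]
  -- row and column sums
  have hrow : ∀ i, ∑ j, M i j = (outdeg R i : ℝ) := by
    intro i
    simp only [hMapp]
    rw [Finset.sum_add_distrib, ← Finset.mul_sum, ← Finset.mul_sum,
      Finset.sum_ite_eq Finset.univ i, Finset.sum_boole]
    simp only [Finset.mem_univ, if_true, outdeg]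
    ring
  set c : Fin n → ℝ := fun j => α * (outdeg R j : ℝ) + (1-α) * (indeg R j : ℝ) with hc
  have hcol : ∀ j, ∑ i, M i j = c j := by
    intro j
    simp only [hMapp, hc]
    rw [Finset.sum_add_distrib, ← Finset.mul_sum, ← Finset.mul_sum,
      Finset.sum_ite_eq' Finset.univ j, Finset.sum_boole]
    simp only [Finset.mem_univ, if_true, indeg]
  have hsumout : ∑ i, (outdeg R i : ℝ) = a := by
    rw [ha]; push_cast; rfl
  have hsumin : ∑ j, (indeg R j : ℝ) = a := by
    have hnat : ∑ j, indeg R j = ∑ i, outdeg R i := by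
      simp only [indeg, outdeg, Finset.card_filter]
      exact Finset.sum_comm
    rw [ha]; push_cast [← hnat]; rfl
  have hsumc : ∑ j, c j = a := by
    simp only [hc]
    rw [Finset.sum_add_distrib, ← Finset.mul_sum, ← Finset.mul_sum, hsumout, hsumin]
    ring
  -- vector computations
  have honesdot : (fun _ : Fin n => (1:ℝ)) ⬝ᵥ (fun _ => (1:ℝ)) = (n:ℝ) := by
    simp [dotProduct]
  have hvM : (fun _ : Fin n => (1:ℝ)) ᵥ* M = c := by
    ext j
    simpa [Matrix.vecMul, dotProduct] using hcol j
  have hMH1 : Mᴴ *ᵥ (fun _ : Fin n => (1:ℝ)) = c := by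
    ext j
    simp only [Matrix.mulVec, dotProduct, hMconj, mul_one]
    exact hcol j
  have hM1 : M *ᵥ (fun _ : Fin n => (1:ℝ)) = fun i => (outdeg R i : ℝ) := by
    ext i
    simpa [Matrix.mulVec, dotProduct] using hrow i
  -- Rayleigh on columns
  have hq1 : (fun _ : Fin n => (1:ℝ)) ⬝ᵥ ((M * Mᴴ) *ᵥ (fun _ => (1:ℝ))) = ∑ j, c j ^ 2 := by
    rw [← Matrix.mulVec_mulVec, hMH1, Matrix.dotProduct_mulVec, hvM]
    simp [dotProduct, sq]
  have hray1 : ∑ j, c j ^ 2 ≤ lmax * n := by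
    have := rayleigh (M * Mᴴ) hS (fun _ => (1:ℝ))
    rw [hq1, honesdot] at this
    exact this
  have hcs : (a:ℝ)^2 ≤ (n:ℝ) * ∑ j, c j ^ 2 := by
    have h := sq_sum_le_card_mul_sum_sq (s := Finset.univ) (f := c)
    rw [hsumc] at h
    simpa [Finset.card_univ] using h
  have hl2 : ((a:ℝ)/n)^2 ≤ lmax := by
    rw [div_pow, div_le_iff₀ (by positivity)]
    nlinarith
  have hl0 : 0 ≤ lmax := le_trans (sq_nonneg _) hl2
  -- specNorm = sqrt lmax
  obtain ⟨i0, hi0⟩ := Finite.exists_max hS.eigenvalues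
  have hlmax_eq : lmax = hS.eigenvalues i0 :=
    le_antisymm (ciSup_le hi0) (le_ciSup (Set.Finite.bddAbove (Set.finite_range _)) i0)
  have hspec : specNorm M = Real.sqrt lmax := by
    apply le_antisymm
    · apply ciSup_le
      intro i
      rw [hsing]
      exact Real.sqrt_le_sqrt (by rw [hlmax_eq]; exact hi0 i)
    · rw [hlmax_eq, ← hsing i0]
      exact le_ciSup (Set.Finite.bddAbove (Set.finite_range _)) i0
  have hlow : (a:ℝ)/n ≤ specNorm M := by
    rw [hspec]
    calc (a:ℝ)/n = Real.sqrt (((a:ℝ)/n)^2) := (Real.sqrt_sq (by positivity)).symm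
      _ ≤ Real.sqrt lmax := Real.sqrt_le_sqrt hl2
  refine ⟨hlow, ?_, ?_⟩
  · -- forward direction
    intro h
    have hlm : lmax = ((a:ℝ)/n)^2 := by
      have hs : Real.sqrt lmax = (a:ℝ)/n := by rw [← hspec]; exact h
      rw [← Real.sq_sqrt hl0, hs]
    have hcard : (Fintype.card (Fin n) : ℝ) = (n:ℝ) := by simp
    have hceq : ∀ j, c j = (a:ℝ)/n := by
      apply allEq
      · rw [hcard, hsumc]; field_simp
      · rw [hcard]
        calc ∑ j, c j ^ 2 ≤ lmax * n := hray1
          _ = (n:ℝ) * ((a:ℝ)/n)^2 := by rw [hlm]; ring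
    -- rows
    have hS' := Matrix.isHermitian_conjTranspose_mul_self M
    have hq2 : (fun _ : Fin n => (1:ℝ)) ⬝ᵥ ((Mᴴ * M) *ᵥ (fun _ => (1:ℝ)))
        = ∑ i, (outdeg R i : ℝ) ^ 2 := by
      rw [← Matrix.mulVec_mulVec, hM1, Matrix.dotProduct_mulVec]
      have : (fun _ : Fin n => (1:ℝ)) ᵥ* Mᴴ = fun i => (outdeg R i : ℝ) := by
        ext i
        simp only [Matrix.vecMul, dotProduct, hMconj, one_mul]
        exact hrow i
      rw [this]
      simp [dotProduct, sq]
    have htrans : (⨆ i, hS'.eigenvalues i) ≤ lmax :=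
      ciSup_le fun i => transfer M hl0 i
    have hray2 : ∑ i, (outdeg R i : ℝ) ^ 2 ≤ lmax * n := by
      have hr := rayleigh (Mᴴ * M) hS' (fun _ => (1:ℝ))
      rw [hq2, honesdot] at hr
      calc ∑ i, (outdeg R i : ℝ) ^ 2 ≤ (⨆ i, hS'.eigenvalues i) * n := hr
        _ ≤ lmax * n := mul_le_mul_of_nonneg_right htrans hnpos.le
    have hreq : ∀ i, (outdeg R i : ℝ) = (a:ℝ)/n := by
      apply allEq
      · rw [hcard, hsumout]; field_simp
      · rw [hcard]
        calc ∑ i, (outdeg R i : ℝ) ^ 2 ≤ lmax * n := hray2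
          _ = (n:ℝ) * ((a:ℝ)/n)^2 := by rw [hlm]; ring
    intro i
    refine ⟨hreq i, ?_⟩
    have hci := hceq i
    rw [hc] at hci
    simp only at hci
    rw [hreq i] at hci
    have h2 : (1-α) * (indeg R i : ℝ) = (1-α) * ((a:ℝ)/n) := by linarith
    exact mul_left_cancel₀ (ne_of_gt h1α) h2
  · -- backward direction
    intro hreg
    have hcj : ∀ j, c j = (a:ℝ)/n := by
      intro j
      rw [hc]
      simp only
      rw [(hreg j).1, (hreg j).2]
      ring
    have hrowa : ∀ i, ∑ j, M i j = (a:ℝ)/n := fun i => by rw [hrow i, (hreg i).1]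
    have hBS : ∀ k, ∑ j, |(M * Mᴴ) k j| ≤ ((a:ℝ)/n)^2 := by
      intro k
      have hentry : ∀ j, (M * Mᴴ) k j = ∑ l, M k l * M j l := by
        intro j
        simp [Matrix.mul_apply, hMconj]
      have hnn : ∀ j, 0 ≤ (M * Mᴴ) k j := by
        intro j
        rw [hentry]
        exact Finset.sum_nonneg fun l _ => mul_nonneg (hMnn k l) (hMnn j l)
      calc ∑ j, |(M * Mᴴ) k j| = ∑ j, (M * Mᴴ) k j :=
            Finset.sum_congr rfl fun j _ => abs_of_nonneg (hnn j)
        _ = ∑ j, ∑ l, M k l * M j l := Finset.sum_congr rfl fun j _ => hentry j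
        _ = ∑ l, M k l * ∑ j, M j l := by
            rw [Finset.sum_comm]
            exact Finset.sum_congr rfl fun l _ => by rw [Finset.mul_sum]
        _ = ∑ l, M k l * ((a:ℝ)/n) := by
            exact Finset.sum_congr rfl fun l _ => by rw [hcol l, hcj l]
        _ = (∑ l, M k l) * ((a:ℝ)/n) := by rw [Finset.sum_mul]
        _ ≤ ((a:ℝ)/n)^2 := le_of_eq (by rw [hrowa k]; ring)
    have hup : ∀ i, hS.eigenvalues i ≤ ((a:ℝ)/n)^2 := fun i =>
      eig_le_rowsum _ hS _ hBS i
    have hlm : lmax = ((a:ℝ)/n)^2 := le_antisymm (ciSup_le hup) hl2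
    rw [hspec, hlm, Real.sqrt_sq (by positivity)]
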